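/- For all positive integers s, p and every integer n ≥ s·p + 2, the counts |B^(s)_{p,n}| satisfy |B^(s)_{p,n}| = Σ_{i=0}^{s} C(s,i)·|B^(s)_{p, n−1−i·p}|. -/

import Mathlib

/-- The collection of subsets `F` of the colored set consisting of the `s` colored copies
`(j, c)` (value `j`, color `c ∈ {1, …, s}`) of each `j ∈ {1, …, n-1}` together with `(n, 1)`,
such that `(n,1) ∈ F` and the minimal numerical value of `F` is at least `p * |F|`. -/
def ColoredSchreier (s p n : ℕ) : Finset (Finset (ℕ × ℕ)) :=
  (((Finset.Ico 1 n) ×ˢ (Finset.Icc 1 s)) ∪ {(n, 1)}).powerset.filter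
    fun F => (n, 1) ∈ F ∧ ∀ x ∈ F, p * F.card ≤ x.1

open Finset

private lemma cs_card_of_mem_image {s p n j : ℕ} {F : Finset (ℕ × ℕ)}
    (hF : F ∈ ((Finset.Ico (p * (j+1)) n ×ˢ Finset.Icc 1 s).powersetCard j).image
      (insert ((n : ℕ), (1 : ℕ)))) : F.card = j + 1 := by
  obtain ⟨G, hG, rfl⟩ := Finset.mem_image.mp hF
  rw [Finset.mem_powersetCard] at hG
  have hnot : ((n : ℕ), (1 : ℕ)) ∉ G := by
    intro h
    have := hG.1 h
    rw [Finset.mem_product, Finset.mem_Ico] at this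
    exact absurd this.1.2 (lt_irrefl n)
  rw [Finset.card_insert_of_notMem hnot, hG.2]

private lemma coloredSchreier_eq (s p n : ℕ) (hp : 1 ≤ p) :
    ColoredSchreier s p n = (Finset.range (n / p)).biUnion (fun j =>
      ((Finset.Ico (p * (j+1)) n ×ˢ Finset.Icc 1 s).powersetCard j).image
        (insert ((n : ℕ), (1 : ℕ)))) := by
  ext F
  rw [ColoredSchreier, Finset.mem_filter, Finset.mem_powerset, Finset.mem_biUnion]
  constructor
  · rintro ⟨hsub, hmem, hmin⟩
    have hk : 1 ≤ F.card := Finset.card_pos.mpr ⟨_, hmem⟩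
    have hpn : p * F.card ≤ n := hmin _ hmem
    refine ⟨F.card - 1, ?_, ?_⟩
    · rw [Finset.mem_range]
      have : F.card ≤ n / p := (Nat.le_div_iff_mul_le hp).mpr (by rw [mul_comm]; exact hpn)
      omega
    · rw [Finset.mem_image]
      refine ⟨F.erase ((n : ℕ), (1 : ℕ)), ?_, Finset.insert_erase hmem⟩
      rw [Finset.mem_powersetCard]
      refine ⟨?_, by rw [Finset.card_erase_of_mem hmem]⟩
      intro x hx
      have hxF := Finset.mem_of_mem_erase hx
      have hxne : x ≠ ((n : ℕ), (1 : ℕ)) := Finset.ne_of_mem_erase hx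
      have hxg := hsub hxF
      rw [Finset.mem_union, Finset.mem_singleton] at hxg
      rcases hxg with hxg | hxg
      · rw [Finset.mem_product, Finset.mem_Ico] at hxg
        rw [Finset.mem_product, Finset.mem_Ico]
        have hmx := hmin x hxF
        refine ⟨⟨?_, hxg.1.2⟩, hxg.2⟩
        have : F.card - 1 + 1 = F.card := by omega
        rw [this]
        exact hmx
      · exact absurd hxg hxne
  · rintro ⟨j, hj, hF⟩
    rw [Finset.mem_range] at hj
    have hcard : F.card = j + 1 := cs_card_of_mem_image hF
    obtain ⟨G, hG, rfl⟩ := Finset.mem_image.mp hF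
    rw [Finset.mem_powersetCard] at hG
    have hjn : p * (j + 1) ≤ n := by
      have h1 : (j+1) * p ≤ (n / p) * p := Nat.mul_le_mul_right _ (by omega)
      have h2 : (n / p) * p ≤ n := Nat.div_mul_le_self _ _
      rw [mul_comm]; omega
    constructor
    · intro x hx
      rw [Finset.mem_insert] at hx
      rw [Finset.mem_union, Finset.mem_singleton]
      rcases hx with rfl | hx
      · right; rfl
      · left
        have := hG.1 hx
        rw [Finset.mem_product, Finset.mem_Ico] at this ⊢
        have h1 : 1 ≤ p * (j + 1) := Nat.one_le_iff_ne_zero.mpr (Nat.mul_ne_zero (by omega) (by omega))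
        exact ⟨⟨le_trans h1 this.1.1, this.1.2⟩, this.2⟩
    · refine ⟨Finset.mem_insert_self _ _, ?_⟩
      intro x hx
      rw [hcard]
      rw [Finset.mem_insert] at hx
      rcases hx with rfl | hx
      · exact hjn
      · have := hG.1 hx
        rw [Finset.mem_product, Finset.mem_Ico] at this
        exact this.1.1

private lemma card_coloredSchreier (s p n : ℕ) (hp : 1 ≤ p) :
    (ColoredSchreier s p n).card
      = ∑ j ∈ Finset.range (n / p), (s * (n - p * (j + 1))).choose j := by
  rw [coloredSchreier_eq s p n hp]
  rw [Finset.card_biUnion]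
  · refine Finset.sum_congr rfl fun j _ => ?_
    rw [Finset.card_image_of_injOn, Finset.card_powersetCard, Finset.card_product,
      Nat.card_Ico, Nat.card_Icc]
    · have : s + 1 - 1 = s := by omega
      rw [this, mul_comm]
    · intro G hG G' hG' hins
      simp only [Finset.mem_coe, Finset.mem_powersetCard] at hG hG'
      have key : ∀ H : Finset (ℕ × ℕ), H ⊆ Finset.Ico (p * (j+1)) n ×ˢ Finset.Icc 1 s →
          ((n : ℕ), (1 : ℕ)) ∉ H := by
        intro H hH h
        have := hH h
        rw [Finset.mem_product, Finset.mem_Ico] at this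
        exact absurd this.1.2 (lt_irrefl n)
      calc G = (insert ((n:ℕ),(1:ℕ)) G).erase ((n:ℕ),(1:ℕ)) :=
            (Finset.erase_insert (key G hG.1)).symm
        _ = (insert ((n:ℕ),(1:ℕ)) G').erase ((n:ℕ),(1:ℕ)) := by rw [hins]
        _ = G' := Finset.erase_insert (key G' hG'.1)
  · intro j hj j' hj' hne
    rw [Function.onFun, Finset.disjoint_left]
    intro F hF hF'
    have h1 := cs_card_of_mem_image hF
    have h2 := cs_card_of_mem_image hF'
    exact hne (by omega)

private lemma sum_identity (s p n : ℕ) (hs : 1 ≤ s) (hp : 1 ≤ p) (hn : s * p + 2 ≤ n) :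
    ∑ j ∈ Finset.range (n / p), (s * (n - p * (j + 1))).choose j
      = ∑ i ∈ Finset.range (s + 1), s.choose i *
          ∑ j ∈ Finset.range ((n - 1 - i * p) / p),
            (s * ((n - 1 - i * p) - p * (j + 1))).choose j := by
  set N := (n - 1) / p with hNdef
  have hps : p ≤ s * p := by
    calc p = 1 * p := (one_mul p).symm
    _ ≤ s * p := Nat.mul_le_mul_right p hs
  have hN1 : 1 ≤ N := (Nat.one_le_div_iff hp).mpr (by omega)
  have hip : ∀ i ≤ s, p * i ≤ n - 1 := by
    intro i hi
    have : i * p ≤ s * p := Nat.mul_le_mul_right _ hi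
    rw [mul_comm]
    omega
  have hdiv : ∀ i ≤ s, (n - 1 - i * p) / p = N - i := by
    intro i hi
    have h := Nat.sub_mul_div (n - 1) p i
    rw [hNdef, ← h, mul_comm i p]
  -- Step 0 : shrink the outer range to `range N`
  have hsub0 : Finset.range N ⊆ Finset.range (n / p) :=
    Finset.range_subset_range.mpr (Nat.div_le_div_right (by omega))
  have hzero0 : ∀ j ∈ Finset.range (n / p), j ∉ Finset.range N →
      (s * (n - p * (j + 1))).choose j = 0 := by
    intro j _ hjN
    rw [Finset.mem_range] at hjN
    have hNj : N ≤ j := by omega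
    have hlt : n - 1 < (j + 1) * p := (Nat.div_lt_iff_lt_mul hp).mp (by omega)
    have hz : n - p * (j + 1) = 0 := by rw [mul_comm]; omega
    rw [hz, Nat.mul_zero]
    exact Nat.choose_eq_zero_of_lt (by omega)
  rw [← Finset.sum_subset hsub0 hzero0]
  -- Step 1 : Vandermonde on each term
  have step1 : ∀ j ∈ Finset.range N, (s * (n - p * (j + 1))).choose j
      = ∑ k ∈ Finset.range (j + 1),
          s.choose k * (s * ((n - 1) - p * (j + 1))).choose (j - k) := by
    intro j hj
    rw [Finset.mem_range] at hj
    have hpj : p * (j + 1) ≤ n - 1 := by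
      have h1 : (j + 1) * p ≤ ((n - 1) / p) * p := Nat.mul_le_mul_right _ (by omega)
      have h2 : ((n - 1) / p) * p ≤ n - 1 := Nat.div_mul_le_self _ _
      rw [mul_comm]
      omega
    have e1 : n - p * (j + 1) = ((n - 1) - p * (j + 1)) + 1 := by omega
    rw [e1, Nat.mul_add, Nat.mul_one, Nat.add_comm (s * ((n - 1) - p * (j + 1))) s,
      Nat.add_choose_eq, Finset.Nat.sum_antidiagonal_eq_sum_range_succ_mk]
  rw [Finset.sum_congr rfl step1]
  -- Step 2 : triangle swap
  have swap := Finset.sum_Ico_Ico_comm 0 N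
    (fun i j => s.choose i * (s * ((n - 1) - p * (j + 1))).choose (j - i))
  simp only [← Finset.range_eq_Ico] at swap
  rw [← swap]
  -- Step 3/4 : reindex the inner sums
  have step3 : ∀ i ∈ Finset.range N,
      (∑ j ∈ Finset.Ico i N, s.choose i * (s * ((n - 1) - p * (j + 1))).choose (j - i))
        = s.choose i * ∑ j ∈ Finset.range ((n - 1 - i * p) / p),
            (s * ((n - 1 - i * p) - p * (j + 1))).choose j := by
    intro i _
    rw [Finset.sum_Ico_eq_sum_range]
    by_cases his : i ≤ s
    · rw [Finset.mul_sum, hdiv i his]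
      refine Finset.sum_congr rfl fun j _ => ?_
      have e3 : (n - 1) - p * ((i + j) + 1) = (n - 1 - i * p) - p * (j + 1) := by
        have : p * ((i + j) + 1) = i * p + p * (j + 1) := by ring
        omega
      have e4 : i + j - i = j := by omega
      rw [e3, e4]
    · rw [Nat.choose_eq_zero_of_lt (by omega), Finset.sum_congr rfl
        (fun j _ => zero_mul _), Finset.sum_const_zero, zero_mul]
  rw [Finset.sum_congr rfl step3]
  -- Step 5 : change the outer range from `range N` to `range (s+1)`
  have hvan : ∀ i, N ≤ i ∨ s + 1 ≤ i →
      s.choose i * ∑ j ∈ Finset.range ((n - 1 - i * p) / p),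
        (s * ((n - 1 - i * p) - p * (j + 1))).choose j = 0 := by
    intro i hi
    rcases le_or_gt i s with his | his
    · have hNi : N ≤ i := by omega
      rw [hdiv i his]
      have : N - i = 0 := by omega
      rw [this]
      simp
    · rw [Nat.choose_eq_zero_of_lt his, zero_mul]
  have hA := Finset.sum_subset (f := fun i => s.choose i *
      ∑ j ∈ Finset.range ((n - 1 - i * p) / p),
        (s * ((n - 1 - i * p) - p * (j + 1))).choose j)
    (Finset.range_subset_range.mpr (le_max_left N (s + 1)))
    (fun i _ hi => hvan i (Or.inl (by simpa using hi)))
  have hB := Finset.sum_subset (f := fun i => s.choose i *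
      ∑ j ∈ Finset.range ((n - 1 - i * p) / p),
        (s * ((n - 1 - i * p) - p * (j + 1))).choose j)
    (Finset.range_subset_range.mpr (le_max_right N (s + 1)))
    (fun i _ hi => hvan i (Or.inr (by simpa using hi)))
  exact hA.trans hB.symm

theorem card_coloredSchreier_recurrence (s p n : ℕ) (hs : 1 ≤ s) (hp : 1 ≤ p)
    (hn : s * p + 2 ≤ n) :
    (ColoredSchreier s p n).card =
      ∑ i ∈ Finset.range (s + 1), s.choose i * (ColoredSchreier s p (n - 1 - i * p)).card := by
  rw [card_coloredSchreier s p n hp, sum_identity s p n hs hp hn]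
  exact Finset.sum_congr rfl fun i _ => by
    rw [card_coloredSchreier s p (n - 1 - i * p) hp]
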